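/- Under the hypotheses of the previous statement (h, V differentiable, α_x > α ≥ 0, λ ≥ α_x, C, ρ > 0, μ ≥ 0, δ₀ ≥ Cμ/(α_x ρ), h'(t) ≥ -α h(t) + δ₀ - (C/ρ)V(t), V ≥ 0, V'(t) ≤ -λ V(t) + μ), if additionally h(0) ≥ 0 and (α_x - α)h(0) + δ₀ - (C/ρ)V(0) ≥ 0, then h(t) ≥ 0 for all t ≥ 0. -/

import Mathlib

/-- Grönwall-type nonnegativity: if `f` is differentiable, `f 0 ≥ 0`, and
`deriv f t ≥ -k * f t` for `t ≥ 0` with `k ≥ 0`, then `f t ≥ 0` for `t ≥ 0`. -/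
lemma gronwall_nonneg (f : ℝ → ℝ) (k : ℝ) (hf : Differentiable ℝ f) (hk : 0 ≤ k)
    (h0 : 0 ≤ f 0) (hd : ∀ t : ℝ, 0 ≤ t → -k * f t ≤ deriv f t) :
    ∀ t : ℝ, 0 ≤ t → 0 ≤ f t := by
  set g : ℝ → ℝ := fun t => Real.exp (k * t) * f t with hg
  have hder : ∀ t : ℝ, HasDerivAt g (k * Real.exp (k * t) * f t + Real.exp (k * t) * deriv f t) t := by
    intro t
    have h1 : HasDerivAt (fun t : ℝ => Real.exp (k * t)) (Real.exp (k * t) * k) t :=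
      (Real.hasDerivAt_exp (k * t)).comp t (by simpa using (hasDerivAt_id t).const_mul k)
    have : HasDerivAt (fun y => Real.exp (k * y) * f y) (Real.exp (k * t) * k * f t + Real.exp (k * t) * deriv f t) t := h1.mul (hf t).hasDerivAt
    convert this using 1
    ring
  have hmono : MonotoneOn g (Set.Ici (0:ℝ)) := by
    apply monotoneOn_of_deriv_nonneg (convex_Ici 0)
    · exact (Real.continuous_exp.comp (continuous_const.mul continuous_id)).mul hf.continuous
        |>.continuousOn
    · intro t _
      exact (hder t).differentiableAt.differentiableWithinAt
    · intro t ht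
      rw [interior_Ici] at ht
      rw [(hder t).deriv]
      have h1 := hd t (le_of_lt ht)
      have h2 : (0:ℝ) < Real.exp (k * t) := Real.exp_pos _
      nlinarith
  intro t ht
  have := hmono (Set.self_mem_Ici) (Set.mem_Ici.mpr ht) ht
  have hg0 : g 0 = f 0 := by simp [hg]
  have h2 : (0:ℝ) < Real.exp (k * t) := Real.exp_pos _
  have : 0 ≤ g t := le_trans (by rw [hg0]; exact h0) this
  simp only [hg] at this
  nlinarith

/-- Safety conclusion of Theorem 3 in scalar form: under the predictive CBF
hypotheses, if additionally `h(0) ≥ 0` and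
`(α_x - α) h(0) + δ₀ - (C/ρ) V(0) ≥ 0`, then `h(t) ≥ 0` for all `t ≥ 0`. -/
theorem stmt_4 (h V : ℝ → ℝ) (α αx lam C ρ mu δ₀ : ℝ)
    (hh : Differentiable ℝ h) (hV : Differentiable ℝ V)
    (hα : 0 ≤ α) (hαx : α < αx) (hlam : αx ≤ lam)
    (hC : 0 < C) (hρ : 0 < ρ) (hmu : 0 ≤ mu)
    (hδ₀ : C * mu / (αx * ρ) ≤ δ₀)
    (hhineq : ∀ t : ℝ, 0 ≤ t → -α * h t + δ₀ - (C / ρ) * V t ≤ deriv h t)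
    (hVpos : ∀ t : ℝ, 0 ≤ t → 0 ≤ V t)
    (hVineq : ∀ t : ℝ, 0 ≤ t → deriv V t ≤ -lam * V t + mu)
    (hh0 : 0 ≤ h 0)
    (hH0 : 0 ≤ (αx - α) * h 0 + δ₀ - (C / ρ) * V 0) :
    ∀ t : ℝ, 0 ≤ t → 0 ≤ h t := by
  have hαx0 : 0 < αx := lt_of_le_of_lt hα hαx
  set H : ℝ → ℝ := fun t => (αx - α) * h t + δ₀ - (C / ρ) * V t with hHdef
  have hHdiff : Differentiable ℝ H := by
    apply Differentiable.sub
    · exact (hh.const_mul _).add_const _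
    · exact hV.const_mul _
  have hHderiv : ∀ t : ℝ, deriv H t = (αx - α) * deriv h t - (C / ρ) * deriv V t := by
    intro t
    have h1 : HasDerivAt H ((αx - α) * deriv h t - (C / ρ) * deriv V t) t := by
      exact (((hh t).hasDerivAt.const_mul (αx - α)).add_const δ₀).sub
        ((hV t).hasDerivAt.const_mul (C / ρ))
    exact h1.deriv
  -- key: δ₀ * αx ≥ C * mu / ρ
  have hkey : C * mu / ρ ≤ δ₀ * αx := by
    have h1 : C * mu / (αx * ρ) * αx ≤ δ₀ * αx :=
      mul_le_mul_of_nonneg_right hδ₀ (le_of_lt hαx0)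
    calc C * mu / ρ = C * mu / (αx * ρ) * αx := by field_simp
    _ ≤ δ₀ * αx := h1
  have hHnn : ∀ t : ℝ, 0 ≤ t → 0 ≤ H t := by
    apply gronwall_nonneg H α hHdiff hα
    · exact hH0
    · intro t ht
      rw [hHderiv t]
      have h1 := hhineq t ht
      have h2 := hVineq t ht
      have h3 := hVpos t ht
      have hCρ : 0 < C / ρ := div_pos hC hρ
      have h4 : 0 ≤ (C / ρ) * (lam - αx) * V t := mul_nonneg (mul_nonneg (le_of_lt hCρ) (sub_nonneg.mpr hlam)) h3
      have h5 : C * mu / ρ = (C / ρ) * mu := by ring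
      simp only [hHdef]
      nlinarith [mul_le_mul_of_nonneg_left h1 (le_of_lt (sub_pos.mpr hαx)),
        mul_le_mul_of_nonneg_left h2 (le_of_lt hCρ)]
  apply gronwall_nonneg h αx hh (le_of_lt hαx0) hh0
  intro t ht
  have h1 := hhineq t ht
  have h2 := hHnn t ht
  simp only [hHdef] at h2
  nlinarith
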